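/- (Submultiplicativity of the rank weight under the cyclic product.) Let K be a field and L a finite-dimensional field extension of K, and let · denote the cyclic product on Lⁿ. For all x, y ∈ Lⁿ, the support of x·y is contained in the K-subspace of L spanned by the products {a·b : a ∈ Supp(x), b ∈ Supp(y)}; consequently ω(x·y) ≤ ω(x) · ω(y). -/

import Mathlib

open Pointwise


/-- The rank support of a vector `x ∈ Lⁿ`: the `K`-subspace of `L` spanned by its
coordinates. -/
def rankSupp (K : Type*) {L : Type*} [Field K] [Field L] [Algebra K L]
    {ι : Type*} (x : ι → L) : Submodule K L :=
  Submodule.span K (Set.range x)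

/-- The rank weight of a vector `x ∈ Lⁿ`: the `K`-dimension of its support. -/
noncomputable def rankWeight (K : Type*) {L : Type*} [Field K] [Field L] [Algebra K L]
    {ι : Type*} (x : ι → L) : ℕ :=
  Module.finrank K (rankSupp K x)

/-- The cyclic product of two vectors indexed by `ZMod n`:
`(x · y)_k = Σ_{i+j ≡ k mod n} xᵢ yⱼ`. -/
def cycProd {n : ℕ} [NeZero n] {F : Type*} [CommRing F] (x y : ZMod n → F) :
    ZMod n → F := fun k => ∑ i : ZMod n, x i * y (k - i)

/-- submultiplicativity of the rank weight under the cyclic product: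
`Supp(x·y)` is contained in the `K`-span of `{a·b : a ∈ Supp(x), b ∈ Supp(y)}`;
consequently `ω(x·y) ≤ ω(x)·ω(y)`. -/
theorem rankWeight_cycProd_le (K L : Type*) [Field K] [Field L] [Algebra K L]
    [FiniteDimensional K L] {n : ℕ} [NeZero n] (x y : ZMod n → L) :
    rankSupp K (cycProd x y)
        ≤ Submodule.span K {z : L | ∃ a ∈ rankSupp K x, ∃ b ∈ rankSupp K y, z = a * b} ∧
    rankWeight K (cycProd x y) ≤ rankWeight K x * rankWeight K y := by

  classical
  set p := rankSupp K x with hp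
  set q := rankSupp K y with hq
  set S : Set L := {z : L | ∃ a ∈ p, ∃ b ∈ q, z = a * b} with hS
  have hsupp : rankSupp K (cycProd x y) ≤ Submodule.span K S := by
    rw [rankSupp, Submodule.span_le]
    rintro _ ⟨k, rfl⟩
    apply Submodule.sum_mem
    intro i _
    apply Submodule.subset_span
    exact ⟨x i, Submodule.subset_span ⟨i, rfl⟩, y (k - i),
      Submodule.subset_span ⟨k - i, rfl⟩, rfl⟩
  refine ⟨hsupp, ?_⟩
  -- identify span S with p * q
  have hSset : S = (p : Set L) * (q : Set L) := by
    ext z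
    simp only [hS, Set.mem_setOf_eq, Set.mem_mul]
    constructor
    · rintro ⟨a, ha, b, hb, rfl⟩; exact ⟨a, ha, b, hb, rfl⟩
    · rintro ⟨a, ha, b, hb, rfl⟩; exact ⟨a, ha, b, hb, rfl⟩
  have hspanS : Submodule.span K S = p * q := by
    rw [hSset, ← Submodule.span_mul_span, Submodule.span_eq, Submodule.span_eq]
  -- bases
  let m := Module.finrank K p
  let m' := Module.finrank K q
  let b : Module.Basis (Fin m) K p := Module.finBasis K p
  let c : Module.Basis (Fin m') K q := Module.finBasis K q
  let f : Fin m → L := fun i => (b i : L)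
  let g : Fin m' → L := fun j => (c j : L)
  have hf : Submodule.span K (Set.range f) = p := by
    have : Set.range f = p.subtype '' Set.range b := by
      rw [← Set.range_comp]; rfl
    rw [this, ← Submodule.map_span, b.span_eq, Submodule.map_top, Submodule.range_subtype]
  have hg : Submodule.span K (Set.range g) = q := by
    have : Set.range g = q.subtype '' Set.range c := by
      rw [← Set.range_comp]; rfl
    rw [this, ← Submodule.map_span, c.span_eq, Submodule.map_top, Submodule.range_subtype]
  have hpq : p * q = Submodule.span K
      (Set.range (fun ij : Fin m × Fin m' => f ij.1 * g ij.2)) := by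
    rw [← hf, ← hg, Submodule.span_mul_span]
    congr 1
    ext z
    simp only [Set.mem_mul, Set.mem_range]
    constructor
    · rintro ⟨_, ⟨i, rfl⟩, _, ⟨j, rfl⟩, rfl⟩; exact ⟨(i, j), rfl⟩
    · rintro ⟨⟨i, j⟩, rfl⟩; exact ⟨f i, ⟨i, rfl⟩, g j, ⟨j, rfl⟩, rfl⟩
  have h1 : rankWeight K (cycProd x y) ≤ Module.finrank K (Submodule.span K S) :=
    Submodule.finrank_mono hsupp
  have h2 : Module.finrank K (Submodule.span K S) ≤ m * m' := by
    rw [hspanS, hpq]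
    calc Module.finrank K (Submodule.span K
        (Set.range (fun ij : Fin m × Fin m' => f ij.1 * g ij.2)))
        ≤ Fintype.card (Fin m × Fin m') := finrank_range_le_card _
      _ = m * m' := by simp
  exact h1.trans h2
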